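/- Let A be an extremal n × m doubly stochastic array. Then every entry of A is an integral multiple of gcd(n, m); in particular A is an integer matrix. -/
import Mathlib


/-- An `n × m` real matrix is a *doubly stochastic array* if its entries are
nonnegative, each column sums to `n` and each row sums to `m`. -/
def IsDSA (n m : ℕ) (A : Matrix (Fin n) (Fin m) ℝ) : Prop :=
  (∀ i j, 0 ≤ A i j) ∧ (∀ j, ∑ i, A i j = (n : ℝ)) ∧ (∀ i, ∑ j, A i j = (m : ℝ))

/-- An array `A ∈ S(n,m)` is *extremal* if it cannot be written as a convex
combination of two doubly stochastic arrays both different from `A`. -/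
def IsExtremal (n m : ℕ) (A : Matrix (Fin n) (Fin m) ℝ) : Prop :=
  IsDSA n m A ∧ ∀ (B C : Matrix (Fin n) (Fin m) ℝ) (t : ℝ),
    IsDSA n m B → IsDSA n m C → 0 < t → t < 1 →
    A = t • B + (1 - t) • C → B = A ∨ C = A

/-- The support of a matrix: the set of positions of its nonzero entries. -/
def matSupp (n m : ℕ) (A : Matrix (Fin n) (Fin m) ℝ) : Set (Fin n × Fin m) :=
  {p | A p.1 p.2 ≠ 0}

/-- The size of the support of a matrix. -/
noncomputable def suppCard (n m : ℕ) (A : Matrix (Fin n) (Fin m) ℝ) : ℕ :=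
  (matSupp n m A).ncard

/-- A subset `Ω` of positions contains a *cycle* if there are `s ≥ 2`, distinct row
indices `i₁,…,i_s` and distinct column indices `j₁,…,j_s` such that all the pairs
`(i₁,j₁), (i₂,j₁), (i₂,j₂), (i₃,j₂), …, (i_s,j_s), (i₁,j_s)` belong to `Ω`. -/
def ContainsCycle (n m : ℕ) (Ω : Set (Fin n × Fin m)) : Prop :=
  ∃ s : ℕ, 2 ≤ s ∧ ∃ (i : ZMod s → Fin n) (j : ZMod s → Fin m),
    Function.Injective i ∧ Function.Injective j ∧
    ∀ t : ZMod s, (i t, j t) ∈ Ω ∧ (i (t + 1), j t) ∈ Ω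

/-- Two matrices are *equivalent* if one is obtained from the other by a
permutation of rows and a permutation of columns. -/
def MatEquiv (n m : ℕ) (A B : Matrix (Fin n) (Fin m) ℝ) : Prop :=
  ∃ (σ : Equiv.Perm (Fin n)) (τ : Equiv.Perm (Fin m)), ∀ i j, B i j = A (σ i) (τ j)

lemma exists_leaf (n m : ℕ) (Ω : Set (Fin n × Fin m)) (hne : Ω.Nonempty)
    (hnc : ¬ ContainsCycle n m Ω) :
    ∃ p ∈ Ω, (∀ j', (p.1, j') ∈ Ω → j' = p.2) ∨ (∀ i', (i', p.2) ∈ Ω → i' = p.1) := by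
  classical
  by_contra h
  push_neg at h
  -- h : ∀ p ∈ Ω, (∃ j', (p.1, j') ∈ Ω ∧ j' ≠ p.2) ∧ (∃ i', (i', p.2) ∈ Ω ∧ i' ≠ p.1)
  have hstep : ∀ p : Fin n × Fin m, p ∈ Ω →
      ∃ q : Fin n × Fin m, q ∈ Ω ∧ (q.1, p.2) ∈ Ω ∧ q.1 ≠ p.1 ∧ q.2 ≠ p.2 := by
    intro p hp
    obtain ⟨-, i', hi'Ω, hi'ne⟩ := h p hp
    obtain ⟨⟨j', hj'Ω, hj'ne⟩, -⟩ := h (i', p.2) hi'Ω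
    exact ⟨(i', j'), hj'Ω, hi'Ω, hi'ne, hj'ne⟩
  let g : {p : Fin n × Fin m // p ∈ Ω} → {p : Fin n × Fin m // p ∈ Ω} :=
    fun p => ⟨(hstep p.1 p.2).choose, (hstep p.1 p.2).choose_spec.1⟩
  let W : ℕ → {p : Fin n × Fin m // p ∈ Ω} := fun k => g^[k] ⟨hne.choose, hne.choose_spec⟩
  set I : ℕ → Fin n := fun k => (W k).1.1 with hI
  set J : ℕ → Fin m := fun k => (W k).1.2 with hJ
  have hWsucc : ∀ k, W (k+1) = g (W k) := by
    intro k; simp only [W, Function.iterate_succ_apply']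
  have hmem : ∀ k, (I k, J k) ∈ Ω := by
    intro k; have := (W k).2; simpa [I, J] using this
  have hspec : ∀ k, (I (k+1), J k) ∈ Ω ∧ I (k+1) ≠ I k ∧ J (k+1) ≠ J k := by
    intro k
    have h1 : W (k+1) = g (W k) := hWsucc k
    have h2 := (hstep (W k).1 (W k).2).choose_spec
    have h3 : (W (k+1)).1 = (hstep (W k).1 (W k).2).choose := by rw [h1]
    refine ⟨?_, ?_, ?_⟩
    · simpa [I, J, h3] using h2.2.1
    · simpa [I, h3] using h2.2.2.1
    · simpa [J, h3] using h2.2.2.2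
  -- find the first repeat
  have hrep : ∃ b : ℕ, ∃ a < b, I a = I b ∨ J a = J b := by
    obtain ⟨a, b, hab, heq⟩ := Finite.exists_ne_map_eq_of_infinite I
    rcases lt_or_gt_of_ne hab with hlt | hlt
    · exact ⟨b, a, hlt, Or.inl heq⟩
    · exact ⟨a, b, hlt, Or.inl heq.symm⟩
  let b := Nat.find hrep
  have hbspec : ∃ a < b, I a = I b ∨ J a = J b := Nat.find_spec hrep
  have hbmin : ∀ b' < b, ¬ ∃ a < b', I a = I b' ∨ J a = J b' := fun b' hb' => Nat.find_min hrep hb'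
  have hIinj : ∀ k l, k < l → l < b → I k ≠ I l := by
    intro k l hkl hlb heq
    exact hbmin l hlb ⟨k, hkl, Or.inl heq⟩
  have hJinj : ∀ k l, k < l → l < b → J k ≠ J l := by
    intro k l hkl hlb heq
    exact hbmin l hlb ⟨k, hkl, Or.inr heq⟩
  apply hnc
  by_cases hcase : ∃ a < b, I a = I b
  -- CASE 1 : row repeat
  · obtain ⟨a, hab, hIa⟩ := hcase
    set s := b - a with hs
    have hs2 : 2 ≤ s := by
      rcases Nat.lt_or_ge (a+1) b with h1 | h1
      · omega
      · -- b = a + 1 : contradiction with I (a+1) ≠ I a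
        have hb1 : b = a + 1 := by omega
        exact absurd (hb1 ▸ hIa).symm (hspec a).2.1
    haveI : NeZero s := ⟨by omega⟩
    refine ⟨s, hs2, fun t => I (a + t.val), fun t => J (a + t.val), ?_, ?_, ?_⟩
    · intro t t' heq
      by_contra hne
      have hv : t.val ≠ t'.val := fun hv => hne (ZMod.val_injective s hv)
      have h1 : t.val < s := ZMod.val_lt t
      have h2 : t'.val < s := ZMod.val_lt t'
      rcases lt_or_gt_of_ne hv with hlt | hlt
      · exact hIinj (a + t.val) (a + t'.val) (by omega) (by omega) heq
      · exact hIinj (a + t'.val) (a + t.val) (by omega) (by omega) heq.symm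
    · intro t t' heq
      by_contra hne
      have hv : t.val ≠ t'.val := fun hv => hne (ZMod.val_injective s hv)
      have h1 : t.val < s := ZMod.val_lt t
      have h2 : t'.val < s := ZMod.val_lt t'
      rcases lt_or_gt_of_ne hv with hlt | hlt
      · exact hJinj (a + t.val) (a + t'.val) (by omega) (by omega) heq
      · exact hJinj (a + t'.val) (a + t.val) (by omega) (by omega) heq.symm
    · intro t
      haveI : Fact (1 < s) := ⟨hs2⟩
      have hv1 : (t + 1).val = (t.val + 1) % s := by
        rw [ZMod.val_add, ZMod.val_one]
      have ht : t.val < s := ZMod.val_lt t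
      constructor
      · exact hmem _
      · show (I (a + (t+1).val), J (a + t.val)) ∈ Ω
        rcases Nat.lt_or_ge (t.val + 1) s with h1 | h1
        · have h2 : (t+1).val = t.val + 1 := by rw [hv1, Nat.mod_eq_of_lt h1]
          rw [h2]
          have harr : a + (t.val + 1) = a + t.val + 1 := by omega
          rw [harr]
          exact (hspec (a + t.val)).1
        · have hts : t.val + 1 = s := by omega
          have h2 : (t+1).val = 0 := by rw [hv1, hts, Nat.mod_self]
          rw [h2]
          have hb1 : a + t.val + 1 = b := by omega
          have := (hspec (a + t.val)).1
          rw [hb1] at this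
          simpa [← hIa] using this
  -- CASE 2 : column repeat, and I is injective on [0,b]
  · push_neg at hcase
    obtain ⟨a, hab, hor⟩ := hbspec
    have hJa : J a = J b := by
      rcases hor with h1 | h1
      · exact absurd h1 (hcase a hab)
      · exact h1
    have hIinj' : ∀ k l, k < l → l ≤ b → I k ≠ I l := by
      intro k l hkl hlb
      rcases Nat.lt_or_ge l b with h1 | h1
      · exact hIinj k l hkl h1
      · have : l = b := by omega
        subst this; exact fun heq => hcase k hkl heq
    set s := b - a with hs
    have hs2 : 2 ≤ s := by
      rcases Nat.lt_or_ge (a+1) b with h1 | h1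
      · omega
      · have hb1 : b = a + 1 := by omega
        exact absurd (hb1 ▸ hJa).symm (hspec a).2.2
    haveI : NeZero s := ⟨by omega⟩
    haveI : Fact (1 < s) := ⟨hs2⟩
    refine ⟨s, hs2, fun t => I (a + 1 + t.val), fun t => J (a + (t.val + 1) % s), ?_, ?_, ?_⟩
    · intro t t' heq
      by_contra hne
      have hv : t.val ≠ t'.val := fun hv => hne (ZMod.val_injective s hv)
      have h1 : t.val < s := ZMod.val_lt t
      have h2 : t'.val < s := ZMod.val_lt t'
      rcases lt_or_gt_of_ne hv with hlt | hlt
      · exact hIinj' (a + 1 + t.val) (a + 1 + t'.val) (by omega) (by omega) heq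
      · exact hIinj' (a + 1 + t'.val) (a + 1 + t.val) (by omega) (by omega) heq.symm
    · intro t t' heq
      by_contra hne
      have hv : t.val ≠ t'.val := fun hv => hne (ZMod.val_injective s hv)
      have h1 : t.val < s := ZMod.val_lt t
      have h2 : t'.val < s := ZMod.val_lt t'
      -- indices a + (v+1)%s are distinct and < b
      have key : ∀ u v : ℕ, u < s → v < s → u ≠ v → J (a + (u+1) % s) ≠ J (a + (v+1) % s) := by
        intro u v hu hv huv
        have h3 : (u+1) % s ≠ (v+1) % s := by
          rcases Nat.lt_or_ge (u+1) s with h4 | h4 <;> rcases Nat.lt_or_ge (v+1) s with h5 | h5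
          · rw [Nat.mod_eq_of_lt h4, Nat.mod_eq_of_lt h5]; omega
          · have hv5 : v + 1 = s := by omega
            rw [Nat.mod_eq_of_lt h4, hv5, Nat.mod_self]; omega
          · have hu5 : u + 1 = s := by omega
            rw [Nat.mod_eq_of_lt h5, hu5, Nat.mod_self]; omega
          · omega
        have h4 : (u+1) % s < s := Nat.mod_lt _ (by omega)
        have h5 : (v+1) % s < s := Nat.mod_lt _ (by omega)
        rcases lt_or_gt_of_ne h3 with hlt | hlt
        · exact hJinj (a + (u+1)%s) (a + (v+1)%s) (by omega) (by omega)
        · exact fun heq => (hJinj (a + (v+1)%s) (a + (u+1)%s) (by omega) (by omega)) heq.symm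
      exact key t.val t'.val (ZMod.val_lt t) (ZMod.val_lt t') hv heq
    · intro t
      have hv1 : (t + 1).val = (t.val + 1) % s := by
        rw [ZMod.val_add, ZMod.val_one]
      have ht : t.val < s := ZMod.val_lt t
      constructor
      · show (I (a + 1 + t.val), J (a + (t.val + 1) % s)) ∈ Ω
        rcases Nat.lt_or_ge (t.val + 1) s with h1 | h1
        · have he : (t.val + 1) % s = t.val + 1 := Nat.mod_eq_of_lt h1
          rw [he]
          have harr2 : a + (t.val + 1) = a + 1 + t.val := by omega
          rw [harr2]
          exact hmem _
        · have hts : t.val + 1 = s := by omega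
          have he : (t.val + 1) % s = 0 := by rw [hts, Nat.mod_self]
          rw [he]
          have hb1 : a + 1 + t.val = b := by omega
          rw [hb1]
          simp only [Nat.add_zero]
          rw [hJa]
          exact hmem b
      · show (I (a + 1 + (t+1).val), J (a + (t.val + 1) % s)) ∈ Ω
        rcases Nat.lt_or_ge (t.val + 1) s with h1 | h1
        · have he : (t.val + 1) % s = t.val + 1 := Nat.mod_eq_of_lt h1
          have he2 : (t+1).val = t.val + 1 := by rw [hv1, he]
          rw [he2, he]
          have harr : a + 1 + (t.val + 1) = a + 1 + t.val + 1 := by omega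
          have harr2 : a + (t.val + 1) = a + 1 + t.val := by omega
          rw [harr, harr2]
          exact (hspec (a + 1 + t.val)).1
        · have hts : t.val + 1 = s := by omega
          have he : (t.val + 1) % s = 0 := by rw [hts, Nat.mod_self]
          have he2 : (t+1).val = 0 := by rw [hv1, he]
          rw [he2, he]
          simp only [Nat.add_zero]
          exact (hspec a).1

lemma extremal_no_cycle (n m : ℕ) (A : Matrix (Fin n) (Fin m) ℝ)
    (hA : IsExtremal n m A) : ¬ ContainsCycle n m (matSupp n m A) := by
  classical
  rintro ⟨s, hs2, i, j, hi, hj, hcyc⟩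
  haveI : NeZero s := ⟨by omega⟩
  haveI : Fact (1 < s) := ⟨hs2⟩
  -- positivity of entries on the cycle
  have hApos : ∀ t : ZMod s, 0 < A (i t) (j t) ∧ 0 < A (i (t+1)) (j t) := by
    intro t
    obtain ⟨h1, h2⟩ := hcyc t
    exact ⟨lt_of_le_of_ne (hA.1.1 _ _) (Ne.symm h1), lt_of_le_of_ne (hA.1.1 _ _) (Ne.symm h2)⟩
  set F : ZMod s → ℝ := fun t => min (A (i t) (j t)) (A (i (t+1)) (j t)) with hF
  have hne : (Finset.univ : Finset (ZMod s)).Nonempty := Finset.univ_nonempty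
  set ε : ℝ := Finset.univ.inf' hne F with hε
  have hεpos : 0 < ε := by
    rw [hε, Finset.lt_inf'_iff]
    intro t _
    exact lt_min (hApos t).1 (hApos t).2
  have hεle1 : ∀ t : ZMod s, ε ≤ A (i t) (j t) := fun t =>
    le_trans (Finset.inf'_le F (Finset.mem_univ t)) (min_le_left _ _)
  have hεle2 : ∀ t : ZMod s, ε ≤ A (i (t+1)) (j t) := fun t =>
    le_trans (Finset.inf'_le F (Finset.mem_univ t)) (min_le_right _ _)
  -- the perturbation matrix
  set E : Matrix (Fin n) (Fin m) ℝ := fun p q =>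
    ε * ((∑ t : ZMod s, if p = i t ∧ q = j t then (1:ℝ) else 0)
       - (∑ t : ZMod s, if p = i (t+1) ∧ q = j t then (1:ℝ) else 0)) with hE
  -- row sums of E vanish
  have hErow : ∀ p, ∑ q, E p q = 0 := by
    intro p
    simp only [hE]
    rw [← Finset.mul_sum]
    have : ∑ q, ((∑ t : ZMod s, if p = i t ∧ q = j t then (1:ℝ) else 0)
       - (∑ t : ZMod s, if p = i (t+1) ∧ q = j t then (1:ℝ) else 0)) = 0 := by
      rw [Finset.sum_sub_distrib]
      have hc1 : (∑ q, ∑ t : ZMod s, if p = i t ∧ q = j t then (1:ℝ) else 0)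
          = ∑ t : ZMod s, ∑ q, if p = i t ∧ q = j t then (1:ℝ) else 0 := Finset.sum_comm
      have hc2 : (∑ q, ∑ t : ZMod s, if p = i (t+1) ∧ q = j t then (1:ℝ) else 0)
          = ∑ t : ZMod s, ∑ q, if p = i (t+1) ∧ q = j t then (1:ℝ) else 0 := Finset.sum_comm
      rw [hc1, hc2]
      have h1 : ∀ t : ZMod s, (∑ q, if p = i t ∧ q = j t then (1:ℝ) else 0)
          = if p = i t then 1 else 0 := by
        intro t
        rcases eq_or_ne p (i t) with h | h
        · simp [h]
        · simp [h]
      have h2 : ∀ t : ZMod s, (∑ q, if p = i (t+1) ∧ q = j t then (1:ℝ) else 0)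
          = if p = i (t+1) then 1 else 0 := by
        intro t
        rcases eq_or_ne p (i (t+1)) with h | h
        · simp [h]
        · simp [h]
      simp only [h1, h2]
      rw [sub_eq_zero]
      exact (Fintype.sum_equiv (Equiv.addRight (1 : ZMod s)) _ _ (fun t => rfl)).symm
    rw [this, mul_zero]
  -- column sums of E vanish
  have hEcol : ∀ q, ∑ p, E p q = 0 := by
    intro q
    simp only [hE]
    rw [← Finset.mul_sum]
    have : ∑ p, ((∑ t : ZMod s, if p = i t ∧ q = j t then (1:ℝ) else 0)
       - (∑ t : ZMod s, if p = i (t+1) ∧ q = j t then (1:ℝ) else 0)) = 0 := by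
      rw [Finset.sum_sub_distrib]
      have hc1 : (∑ p, ∑ t : ZMod s, if p = i t ∧ q = j t then (1:ℝ) else 0)
          = ∑ t : ZMod s, ∑ p, if p = i t ∧ q = j t then (1:ℝ) else 0 := Finset.sum_comm
      have hc2 : (∑ p, ∑ t : ZMod s, if p = i (t+1) ∧ q = j t then (1:ℝ) else 0)
          = ∑ t : ZMod s, ∑ p, if p = i (t+1) ∧ q = j t then (1:ℝ) else 0 := Finset.sum_comm
      rw [hc1, hc2]
      have h1 : ∀ t : ZMod s, (∑ p, if p = i t ∧ q = j t then (1:ℝ) else 0)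
          = if q = j t then 1 else 0 := by
        intro t
        rcases eq_or_ne q (j t) with h | h
        · simp [h]
        · simp [h]
      have h2 : ∀ t : ZMod s, (∑ p, if p = i (t+1) ∧ q = j t then (1:ℝ) else 0)
          = if q = j t then 1 else 0 := by
        intro t
        rcases eq_or_ne q (j t) with h | h
        · simp [h]
        · simp [h]
      simp only [h1, h2, sub_self, Finset.sum_const_zero]
    rw [this, mul_zero]
  -- entrywise description of E
  have hplus : ∀ p q, (∑ t : ZMod s, if p = i t ∧ q = j t then (1:ℝ) else 0) = 0
      ∨ ∃ t0, p = i t0 ∧ q = j t0 ∧ (∑ t : ZMod s, if p = i t ∧ q = j t then (1:ℝ) else 0) = 1 := by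
    intro p q
    by_cases hex : ∃ t0 : ZMod s, p = i t0 ∧ q = j t0
    · obtain ⟨t0, ht0⟩ := hex
      refine Or.inr ⟨t0, ht0.1, ht0.2, ?_⟩
      rw [Finset.sum_eq_single t0]
      · simp [ht0.1, ht0.2]
      · intro t _ htne
        have : ¬ (p = i t ∧ q = j t) := by
          rintro ⟨h1, h2⟩
          exact htne (hi (ht0.1 ▸ h1.symm))
        simp [this]
      · intro h; exact absurd (Finset.mem_univ t0) h
    · push_neg at hex
      refine Or.inl (Finset.sum_eq_zero fun t _ => ?_)
      have : ¬ (p = i t ∧ q = j t) := fun ⟨h1, h2⟩ => hex t h1 h2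
      simp [this]
  have hminus : ∀ p q, (∑ t : ZMod s, if p = i (t+1) ∧ q = j t then (1:ℝ) else 0) = 0
      ∨ ∃ t0, p = i (t0+1) ∧ q = j t0 ∧ (∑ t : ZMod s, if p = i (t+1) ∧ q = j t then (1:ℝ) else 0) = 1 := by
    intro p q
    by_cases hex : ∃ t0 : ZMod s, p = i (t0+1) ∧ q = j t0
    · obtain ⟨t0, ht0⟩ := hex
      refine Or.inr ⟨t0, ht0.1, ht0.2, ?_⟩
      rw [Finset.sum_eq_single t0]
      · simp [ht0.1, ht0.2]
      · intro t _ htne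
        have : ¬ (p = i (t+1) ∧ q = j t) := by
          rintro ⟨h1, h2⟩
          exact htne (hj (ht0.2 ▸ h2.symm))
        simp [this]
      · intro h; exact absurd (Finset.mem_univ t0) h
    · push_neg at hex
      refine Or.inl (Finset.sum_eq_zero fun t _ => ?_)
      have : ¬ (p = i (t+1) ∧ q = j t) := fun ⟨h1, h2⟩ => hex t h1 h2
      simp [this]
  -- the two indicator sums are never simultaneously 1
  have hnotboth : ∀ (t0 t1 : ZMod s), i t0 = i (t1 + 1) → j t0 = j t1 → False := by
    intro t0 t1 h1 h2
    have ht : t0 = t1 := hj h2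
    subst ht
    have : t0 = t0 + 1 := hi h1
    have h3 : (0 : ZMod s) = 1 := by
      have := left_eq_add.mp this
      exact this.symm ▸ rfl
    exact one_ne_zero h3.symm
  have hEtri : ∀ p q, E p q = 0 ∨ (E p q = ε ∧ ε ≤ A p q) ∨ (E p q = -ε ∧ ε ≤ A p q) := by
    intro p q
    rcases hplus p q with h1 | ⟨t0, hp0, hq0, h1⟩ <;> rcases hminus p q with h2 | ⟨t1, hp1, hq1, h2⟩
    · left; rw [hE]; simp only []; rw [h1, h2]; ring
    · right; right
      constructor
      · show ε * (_ - _) = -ε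
        rw [h1, h2]; ring
      · rw [hp1, hq1]; exact hεle2 t1
    · right; left
      constructor
      · show ε * (_ - _) = ε
        rw [h1, h2]; ring
      · rw [hp0, hq0]; exact hεle1 t0
    · exact absurd (hnotboth t0 t1 (hp0 ▸ hp1) (hq0 ▸ hq1)) id
  -- E at (i 0, j 0) equals ε
  have hE00 : E (i 0) (j 0) = ε := by
    have h1 : (∑ t : ZMod s, if i (0:ZMod s) = i t ∧ j (0:ZMod s) = j t then (1:ℝ) else 0) = 1 := by
      rcases hplus (i 0) (j 0) with h | ⟨t0, hp0, hq0, h⟩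
      · exfalso
        have := Finset.sum_eq_zero_iff_of_nonneg (fun t _ => by positivity) |>.mp h 0 (Finset.mem_univ _)
        simp at this
      · exact h
    have h2 : (∑ t : ZMod s, if i (0:ZMod s) = i (t+1) ∧ j (0:ZMod s) = j t then (1:ℝ) else 0) = 0 := by
      rcases hminus (i 0) (j 0) with h | ⟨t0, hp0, hq0, h⟩
      · exact h
      · exact absurd (hnotboth 0 t0 hp0 hq0) id
    rw [hE]; simp only []; rw [h1, h2]; ring
  -- build B and C
  set B : Matrix (Fin n) (Fin m) ℝ := fun p q => A p q + E p q with hB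
  set C : Matrix (Fin n) (Fin m) ℝ := fun p q => A p q - E p q with hC
  have hBdsa : IsDSA n m B := by
    refine ⟨?_, ?_, ?_⟩
    · intro p q
      rcases hEtri p q with h | ⟨h, hle⟩ | ⟨h, hle⟩
      · simp [hB, h]; exact hA.1.1 p q
      · simp only [hB, h]; have := hA.1.1 p q; linarith
      · simp only [hB, h]; linarith
    · intro q
      simp only [hB]
      rw [Finset.sum_add_distrib, hA.1.2.1 q, hEcol q, add_zero]
    · intro p
      simp only [hB]
      rw [Finset.sum_add_distrib, hA.1.2.2 p, hErow p, add_zero]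
  have hCdsa : IsDSA n m C := by
    refine ⟨?_, ?_, ?_⟩
    · intro p q
      rcases hEtri p q with h | ⟨h, hle⟩ | ⟨h, hle⟩
      · simp [hC, h]; exact hA.1.1 p q
      · simp only [hC, h]; linarith
      · simp only [hC, h]; have := hA.1.1 p q; linarith
    · intro q
      simp only [hC]
      rw [Finset.sum_sub_distrib, hA.1.2.1 q, hEcol q, sub_zero]
    · intro p
      simp only [hC]
      rw [Finset.sum_sub_distrib, hA.1.2.2 p, hErow p, sub_zero]
  have hconv : A = (1/2 : ℝ) • B + (1 - 1/2 : ℝ) • C := by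
    funext p q
    have : ((1/2 : ℝ) • B + (1 - 1/2 : ℝ) • C) p q = (1/2) * B p q + (1/2) * C p q := by
      norm_num [Matrix.add_apply, Matrix.smul_apply, smul_eq_mul]
    rw [this]
    simp only [hB, hC]
    ring
  rcases hA.2 B C (1/2) hBdsa hCdsa (by norm_num) (by norm_num) hconv with h | h
  · have : B (i 0) (j 0) = A (i 0) (j 0) := by rw [h]
    simp only [hB] at this
    rw [hE00] at this
    linarith
  · have : C (i 0) (j 0) = A (i 0) (j 0) := by rw [h]
    simp only [hC] at this
    rw [hE00] at this
    linarith

lemma cycle_mono (n m : ℕ) (Ω₁ Ω₂ : Set (Fin n × Fin m)) (h : Ω₁ ⊆ Ω₂)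
    (hc : ContainsCycle n m Ω₁) : ContainsCycle n m Ω₂ := by
  obtain ⟨s, hs, i, j, hi, hj, hcyc⟩ := hc
  exact ⟨s, hs, i, j, hi, hj, fun t => ⟨h (hcyc t).1, h (hcyc t).2⟩⟩

lemma rowsum_ite (n m : ℕ) (a : Fin n) (b : Fin m) (c : ℝ) (i' : Fin n) :
    ∑ q, (if i' = a ∧ q = b then c else 0) = if i' = a then c else 0 := by
  rcases eq_or_ne i' a with h | h
  · simp [h]
  · simp [h]

lemma colsum_ite (n m : ℕ) (a : Fin n) (b : Fin m) (c : ℝ) (j' : Fin m) :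
    ∑ p, (if p = a ∧ j' = b then c else 0) = if j' = b then c else 0 := by
  rcases eq_or_ne j' b with h | h
  · simp [h]
  · simp [h]

lemma key_lemma (n m : ℕ) (d : ℝ) :
    ∀ (Ω : Finset (Fin n × Fin m)) (A : Matrix (Fin n) (Fin m) ℝ),
      (∀ p q, A p q ≠ 0 → (p, q) ∈ Ω) →
      ¬ ContainsCycle n m (↑Ω) →
      (∀ i, ∃ z : ℤ, ∑ j, A i j = z * d) →
      (∀ j, ∃ z : ℤ, ∑ i, A i j = z * d) →
      ∀ i j, ∃ z : ℤ, A i j = z * d := by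
  classical
  intro Ω
  induction Ω using Finset.strongInduction with
  | _ Ω IH =>
    intro A hsupp hnc hrow hcol i j
    by_cases hij : A i j = 0
    · exact ⟨0, by simp [hij]⟩
    have hneΩ : (↑Ω : Set (Fin n × Fin m)).Nonempty := ⟨(i, j), hsupp i j hij⟩
    obtain ⟨p, hpΩ, hleaf⟩ := exists_leaf n m (↑Ω) hneΩ hnc
    obtain ⟨a, b⟩ := p
    simp only at hleaf
    -- value at the leaf is a multiple of d
    obtain ⟨z, hab⟩ : ∃ z : ℤ, A a b = z * d := by
      rcases hleaf with hrowleaf | hcolleaf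
      · have hval : ∑ q, A a q = A a b := by
          rw [Finset.sum_eq_single b]
          · intro q _ hq
            by_contra h0
            exact hq (hrowleaf q (hsupp a q h0))
          · intro h; exact absurd (Finset.mem_univ b) h
        obtain ⟨z, hz⟩ := hrow a
        exact ⟨z, by rw [← hval]; exact hz⟩
      · have hval : ∑ p, A p b = A a b := by
          rw [Finset.sum_eq_single a]
          · intro p _ hp
            by_contra h0
            exact hp (hcolleaf p (hsupp p b h0))
          · intro h; exact absurd (Finset.mem_univ a) h
        obtain ⟨z, hz⟩ := hcol b
        exact ⟨z, by rw [← hval]; exact hz⟩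
    by_cases hcase : i = a ∧ j = b
    · exact ⟨z, hcase.1 ▸ hcase.2 ▸ hab⟩
    -- recurse on A with entry (a,b) removed
    set A' : Matrix (Fin n) (Fin m) ℝ :=
      fun p q => A p q - (if p = a ∧ q = b then A a b else 0) with hA'
    have hsub : Ω.erase (a, b) ⊂ Ω := Finset.erase_ssubset hpΩ
    have h1 : ∀ p q, A' p q ≠ 0 → (p, q) ∈ Ω.erase (a, b) := by
      intro p q hpq
      rcases eq_or_ne (p, q) (a, b) with h | h
      · exfalso; apply hpq
        have hp : p = a := (Prod.mk.injEq _ _ _ _ ▸ h).1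
        have hq : q = b := (Prod.mk.injEq _ _ _ _ ▸ h).2
        simp [hA', hp, hq]
      · refine Finset.mem_erase.mpr ⟨h, ?_⟩
        apply hsupp
        intro h0
        apply hpq
        have hne : ¬ (p = a ∧ q = b) := by
          intro ⟨ha, hb⟩; exact h (by rw [ha, hb])
        simp [hA', h0, hne]
    have h2 : ¬ ContainsCycle n m (↑(Ω.erase (a, b))) := by
      intro hc
      exact hnc (cycle_mono n m _ _ (by exact_mod_cast Finset.erase_subset _ _) hc)
    have h3 : ∀ i', ∃ z' : ℤ, ∑ q, A' i' q = z' * d := by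
      intro i'
      obtain ⟨z', hz'⟩ := hrow i'
      have hsum : ∑ q, A' i' q
          = (∑ q, A i' q) - (if i' = a then A a b else 0) := by
        simp only [hA']
        rw [Finset.sum_sub_distrib, rowsum_ite]
      rcases eq_or_ne i' a with h | h
      · exact ⟨z' - z, by rw [hsum, if_pos h, hz', hab]; push_cast; ring⟩
      · exact ⟨z', by rw [hsum, if_neg h, sub_zero, hz']⟩
    have h4 : ∀ j', ∃ z' : ℤ, ∑ p, A' p j' = z' * d := by
      intro j'
      obtain ⟨z', hz'⟩ := hcol j'
      have hsum : ∑ p, A' p j'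
          = (∑ p, A p j') - (if j' = b then A a b else 0) := by
        simp only [hA']
        rw [Finset.sum_sub_distrib, colsum_ite]
      rcases eq_or_ne j' b with h | h
      · exact ⟨z' - z, by rw [hsum, if_pos h, hz', hab]; push_cast; ring⟩
      · exact ⟨z', by rw [hsum, if_neg h, sub_zero, hz']⟩
    obtain ⟨z', hz'⟩ := IH (Ω.erase (a, b)) hsub A' h1 h2 h3 h4 i j
    refine ⟨z', ?_⟩
    have heq : A' i j = A i j := by simp [hA', hcase]
    rw [← heq, hz']

/-- Every entry of an extremal doubly stochastic array is an
integral multiple of `gcd(n,m)`; in particular the array is integer valued. -/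
theorem extremal_entries_multiple_of_gcd (n m : ℕ)
    (A : Matrix (Fin n) (Fin m) ℝ) (hA : IsExtremal n m A) :
    ∀ i j, (∃ z : ℤ, A i j = (z : ℝ) * (Nat.gcd n m : ℝ)) ∧
      (∃ w : ℤ, A i j = (w : ℝ)) := by
  classical
  intro i j
  set d : ℕ := Nat.gcd n m with hd
  set Ω : Finset (Fin n × Fin m) := Finset.univ.filter (fun p => A p.1 p.2 ≠ 0) with hΩ
  have hsupp : ∀ p q, A p q ≠ 0 → (p, q) ∈ Ω := by
    intro p q h
    simp [hΩ, h]
  have hΩsub : (↑Ω : Set (Fin n × Fin m)) ⊆ matSupp n m A := by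
    intro p hp
    simp only [hΩ, Finset.coe_filter, Set.mem_setOf_eq, Finset.mem_univ, true_and] at hp
    exact hp
  have hnc : ¬ ContainsCycle n m (↑Ω) := fun hc =>
    extremal_no_cycle n m A hA (cycle_mono n m _ _ hΩsub hc)
  have hrow : ∀ i', ∃ z : ℤ, ∑ j', A i' j' = z * (d : ℝ) := by
    intro i'
    refine ⟨(m / d : ℕ), ?_⟩
    rw [hA.1.2.2 i']
    have hdvd : d ∣ m := Nat.gcd_dvd_right n m
    have h := Nat.div_mul_cancel hdvd
    exact_mod_cast h.symm
  have hcol : ∀ j', ∃ z : ℤ, ∑ i', A i' j' = z * (d : ℝ) := by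
    intro j'
    refine ⟨(n / d : ℕ), ?_⟩
    rw [hA.1.2.1 j']
    have hdvd : d ∣ n := Nat.gcd_dvd_left n m
    have h := Nat.div_mul_cancel hdvd
    exact_mod_cast h.symm
  obtain ⟨z, hz⟩ := key_lemma n m (d : ℝ) Ω A hsupp hnc hrow hcol i j
  refine ⟨⟨z, hz⟩, ⟨z * d, ?_⟩⟩
  rw [hz]
  push_cast
  ring
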